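/- Let C be a Noetherian commutative ring, A and B commutative C-algebras, L an A-module, and R = A ⊗_C B. Suppose that A and A/tr_A(L) are flat as C-modules. Then for every finitely generated B-module N one has tr_A(L)R ∩ tr_B(N)R = (tr_A(L)R)·(tr_B(N)R), where tr_A(L)R and tr_B(N)R denote the extensions of the ideals tr_A(L) ⊆ A and tr_B(N) ⊆ B to R along the canonical maps A → R and B → R. -/

import Mathlib

open scoped TensorProduct

attribute [local instance] Algebra.TensorProduct.rightAlgebra

noncomputable section

/-- The trace ideal of an `R`-module `M`: the sum of the images of all
`R`-linear maps `M → R`. -/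
def traceIdeal (R : Type*) [CommRing R] (M : Type*) [AddCommGroup M] [Module R M] :
    Ideal R :=
  ⨆ f : M →ₗ[R] R, LinearMap.range f

section TorHelpers

open Function LinearMap

lemma aux_chase {C : Type*} [CommRing C]
    {K M Q : Type*} [AddCommGroup K] [AddCommGroup M] [AddCommGroup Q]
    [Module C K] [Module C M] [Module C Q]
    (f : K →ₗ[C] M) (g : M →ₗ[C] Q)
    (hf : Function.Injective f) (hfg : Function.Exact f g)
    (hg : Function.Surjective g) [Module.Flat C Q]
    {N F S : Type*} [AddCommGroup N] [Module C N]
    [AddCommGroup F] [Module C F] [Module.Flat C F]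
    [AddCommGroup S] [Module C S]
    (p : F →ₗ[C] N) (hp : Function.Surjective p)
    (i : S →ₗ[C] F) (hi : Function.Injective i) (hip : Function.Exact i p)
    (x : K ⊗[C] N) (hx : f.rTensor N x = 0) : x = 0 := by
  obtain ⟨x', hx'⟩ := LinearMap.lTensor_surjective K hp x
  have h1 : p.lTensor M (f.rTensor F x') = 0 := by
    rw [← LinearMap.comp_apply, LinearMap.lTensor_comp_rTensor,
      ← LinearMap.rTensor_comp_lTensor, LinearMap.comp_apply, hx', hx]
  have hex1 : Function.Exact (i.lTensor M) (p.lTensor M) := lTensor_exact M hip hp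
  obtain ⟨z, hz⟩ := (hex1 _).mp h1
  have h3 : i.lTensor Q (g.rTensor S z) = 0 := by
    rw [← LinearMap.comp_apply, LinearMap.lTensor_comp_rTensor,
      ← LinearMap.rTensor_comp_lTensor, LinearMap.comp_apply, hz,
      ← Function.comp_apply (f := g.rTensor F), ← LinearMap.coe_comp,
      ← LinearMap.rTensor_comp, hfg.linearMap_comp_eq_zero, LinearMap.rTensor_zero,
      LinearMap.zero_apply]
  have h4 : g.rTensor S z = 0 :=
    Module.Flat.lTensor_preserves_injective_linearMap i hi h3
  have hex2 : Function.Exact (f.rTensor S) (g.rTensor S) := rTensor_exact S hfg hg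
  obtain ⟨w, hw⟩ := (hex2 _).mp h4
  have h5 : f.rTensor F (i.lTensor K w) = f.rTensor F x' := by
    rw [← LinearMap.comp_apply, LinearMap.rTensor_comp_lTensor,
      ← LinearMap.lTensor_comp_rTensor, LinearMap.comp_apply, hw, hz]
  have h6 : i.lTensor K w = x' :=
    Module.Flat.rTensor_preserves_injective_linearMap f hf h5
  have h7 : p ∘ₗ i = 0 := hip.linearMap_comp_eq_zero
  rw [← hx', ← h6, ← Function.comp_apply (f := p.lTensor K), ← LinearMap.coe_comp,
    ← LinearMap.lTensor_comp, h7, LinearMap.lTensor_zero, LinearMap.zero_apply]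

set_option maxHeartbeats 1600000 in
/-- If `0 → K → M → Q → 0` is exact and `Q` is flat, then tensoring with any
module `N` preserves injectivity of `K → M` (i.e. `Tor₁(Q, N) = 0`). -/
lemma rTensor_injective_of_flat_quotient {C : Type*} [CommRing C]
    {K M Q : Type*} [AddCommGroup K] [AddCommGroup M] [AddCommGroup Q]
    [Module C K] [Module C M] [Module C Q]
    (f : K →ₗ[C] M) (g : M →ₗ[C] Q)
    (hf : Function.Injective f) (hfg : Function.Exact f g)
    (hg : Function.Surjective g) [Module.Flat C Q]
    (N : Type*) [AddCommGroup N] [Module C N] :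
    Function.Injective (f.rTensor N) := by
  rw [← LinearMap.ker_eq_bot, eq_bot_iff]
  intro x hx
  rw [LinearMap.mem_ker] at hx
  have := aux_chase (N := N) (F := (N →₀ C)) (S := ↥(LinearMap.ker (Finsupp.linearCombination C (id : N → N)))) f g hf hfg hg (Finsupp.linearCombination C (id : N → N))
    (Finsupp.linearCombination_id_surjective C N)
    (LinearMap.ker (Finsupp.linearCombination C (id : N → N))).subtype
    (Submodule.injective_subtype _)
    (LinearMap.exact_subtype_ker_map _) x hx
  simpa using this

attribute [local instance] Algebra.TensorProduct.rightAlgebra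

section Helpers

variable {C A B : Type*} [CommRing C] [CommRing A] [CommRing B]
    [Algebra C A] [Algebra C B]

lemma tmul_mem_map (I : Ideal A) {i : A} (hi : i ∈ I) (b : B) :
    i ⊗ₜ[C] b ∈ I.map (algebraMap A (A ⊗[C] B)) := by
  have h1 : (i ⊗ₜ[C] (1 : B)) ∈ I.map (algebraMap A (A ⊗[C] B)) :=
    Ideal.mem_map_of_mem _ hi
  have : i ⊗ₜ[C] b = ((1 : A) ⊗ₜ[C] b) * (i ⊗ₜ[C] (1 : B)) := by
    rw [Algebra.TensorProduct.tmul_mul_tmul, one_mul, mul_one]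
  rw [this]
  exact Ideal.mul_mem_left _ _ h1

lemma range_rTensor_le (I : Ideal A) (y : (I.restrictScalars C) ⊗[C] B) :
    (Submodule.subtype (I.restrictScalars C)).rTensor B y
      ∈ I.map (algebraMap A (A ⊗[C] B)) := by
  induction y with
  | zero => simpa using Ideal.zero_mem _
  | tmul i b =>
    rw [LinearMap.rTensor_tmul]
    exact tmul_mem_map I i.2 b
  | add u v hu hv => rw [map_add]; exact Ideal.add_mem _ hu hv

lemma mul_range_rTensor (I : Ideal A) (r : A ⊗[C] B)
    (y : (I.restrictScalars C) ⊗[C] B) :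
    ∃ y', (Submodule.subtype (I.restrictScalars C)).rTensor B y'
      = r * ((Submodule.subtype (I.restrictScalars C)).rTensor B y) := by
  induction r with
  | zero => exact ⟨0, by simp⟩
  | tmul a b =>
    induction y with
    | zero => exact ⟨0, by simp⟩
    | tmul i b' =>
      refine ⟨(⟨a * (i : A), I.mul_mem_left a i.2⟩ : I.restrictScalars C) ⊗ₜ[C] (b * b'), ?_⟩
      rw [LinearMap.rTensor_tmul, LinearMap.rTensor_tmul, Algebra.TensorProduct.tmul_mul_tmul]
      rfl
    | add u v hu hv =>
      obtain ⟨u', hu'⟩ := hu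
      obtain ⟨v', hv'⟩ := hv
      exact ⟨u' + v', by rw [map_add, map_add, mul_add, hu', hv']⟩
  | add r s hr hs =>
    obtain ⟨u', hu'⟩ := hr
    obtain ⟨v', hv'⟩ := hs
    exact ⟨u' + v', by rw [map_add, hu', hv', add_mul]⟩

lemma mem_map_iff_range (I : Ideal A) (x : A ⊗[C] B) :
    x ∈ I.map (algebraMap A (A ⊗[C] B)) ↔
      x ∈ Set.range ((Submodule.subtype (I.restrictScalars C)).rTensor B) := by
  constructor
  · intro hx
    refine Submodule.span_induction ?_ ?_ ?_ ?_ hx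
    · rintro _ ⟨i, hi, rfl⟩
      refine ⟨(⟨i, hi⟩ : I.restrictScalars C) ⊗ₜ[C] (1 : B), ?_⟩
      rw [LinearMap.rTensor_tmul]
      rfl
    · exact ⟨0, map_zero _⟩
    · rintro u v _ _ ⟨u', rfl⟩ ⟨v', rfl⟩
      exact ⟨u' + v', map_add _ _ _⟩
    · rintro r u _ ⟨u', rfl⟩
      obtain ⟨y', hy'⟩ := mul_range_rTensor I r u'
      exact ⟨y', by rw [hy']; rfl⟩
  · rintro ⟨y, rfl⟩
    exact range_rTensor_le I y

end Helpers

section Main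

variable {C A B : Type*} [CommRing C] [CommRing A] [CommRing B]
    [Algebra C A] [Algebra C B]

lemma inf_le_mul_of_flat (I : Ideal A) (J : Ideal B)
    (hq : Module.Flat C (A ⧸ I)) :
    I.map (algebraMap A (A ⊗[C] B)) ⊓ J.map (algebraMap B (A ⊗[C] B)) ≤
      I.map (algebraMap A (A ⊗[C] B)) * J.map (algebraMap B (A ⊗[C] B)) := by
  intro x hx
  obtain ⟨hxI, hxJ⟩ := hx
  -- flatness of A ⧸ I.restrictScalars C over C
  have flatQ : Module.Flat C (A ⧸ (I.restrictScalars C)) :=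
    Module.Flat.of_linearEquiv
      (Submodule.Quotient.restrictScalarsEquiv C I)
  -- the key injectivity
  have inj2 : Function.Injective
      ((Submodule.subtype (I.restrictScalars C)).rTensor (B ⧸ J)) := by
    haveI := flatQ
    exact rTensor_injective_of_flat_quotient
      (Submodule.subtype (I.restrictScalars C)) (I.restrictScalars C).mkQ
      (Submodule.injective_subtype _) (LinearMap.exact_subtype_mkQ _)
      (Submodule.mkQ_surjective _) (B ⧸ J)
  -- write x as image of some y in I ⊗ B
  obtain ⟨y, rfl⟩ := (mem_map_iff_range I x).mp hxI
  -- the quotient map B → B ⧸ J as a C-linear map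
  set q : B →ₗ[C] (B ⧸ J) := (Ideal.Quotient.mkₐ C J).toLinearMap with hq'
  have hqsurj : Function.Surjective q := Ideal.Quotient.mk_surjective
  have hexq : Function.Exact (Submodule.subtype (J.restrictScalars C)) q := by
    rw [LinearMap.exact_iff]
    ext b
    simp [hq', Ideal.Quotient.eq_zero_iff_mem]
  -- Ψ : A ⊗ B → A ⊗ (B ⧸ J)
  set Ψ : (A ⊗[C] B) →ₐ[C] (A ⊗[C] (B ⧸ J)) :=
    Algebra.TensorProduct.map (AlgHom.id C A) (Ideal.Quotient.mkₐ C J) with hΨ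
  -- x ∈ JR implies Ψ x = 0
  have hker : ∀ z ∈ J.map (algebraMap B (A ⊗[C] B)), Ψ z = 0 := by
    intro z hz
    have : J.map (algebraMap B (A ⊗[C] B)) ≤ RingHom.ker Ψ.toRingHom := by
      rw [Ideal.map_le_iff_le_comap]
      intro j hj
      simp only [Ideal.mem_comap, RingHom.mem_ker]
      show Ψ (algebraMap B (A ⊗[C] B) j) = 0
      have : algebraMap B (A ⊗[C] B) j = (1 : A) ⊗ₜ[C] j := rfl
      rw [this, hΨ, Algebra.TensorProduct.map_tmul]
      simp [Ideal.Quotient.eq_zero_iff_mem.mpr hj]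
    exact this hz
  have hΨx : Ψ ((Submodule.subtype (I.restrictScalars C)).rTensor B y) = 0 :=
    hker _ hxJ
  -- commutation: Ψ ∘ rTensor ι = rTensor ι ∘ lTensor q
  have hcomm : ∀ w : (I.restrictScalars C) ⊗[C] B,
      Ψ ((Submodule.subtype (I.restrictScalars C)).rTensor B w)
        = (Submodule.subtype (I.restrictScalars C)).rTensor (B ⧸ J)
            (q.lTensor (I.restrictScalars C) w) := by
    intro w
    induction w with
    | zero => simp
    | tmul i b =>
      rw [LinearMap.rTensor_tmul, LinearMap.lTensor_tmul, LinearMap.rTensor_tmul, hΨ,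
        Algebra.TensorProduct.map_tmul]
      rfl
    | add u v hu hv => rw [map_add, map_add, map_add, map_add, hu, hv]
  -- conclude q.lTensor y = 0
  have h0 : q.lTensor (I.restrictScalars C) y = 0 := by
    apply inj2
    rw [← hcomm y, hΨx, map_zero]
  -- pull back to I ⊗ J
  have hexT : Function.Exact
      ((Submodule.subtype (J.restrictScalars C)).lTensor (I.restrictScalars C))
      (q.lTensor (I.restrictScalars C)) :=
    lTensor_exact (I.restrictScalars C) hexq hqsurj
  obtain ⟨z, hz⟩ := (hexT y).mp h0
  -- the image of I ⊗ J lands in the product ideal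
  rw [← hz]
  clear hz hΨx h0 hxJ hxI
  induction z with
  | zero => simpa using Ideal.zero_mem _
  | tmul i j =>
    rw [LinearMap.lTensor_tmul, LinearMap.rTensor_tmul]
    have key : ∀ (a : A) (b : B), a ∈ I → b ∈ J →
        a ⊗ₜ[C] b ∈ I.map (algebraMap A (A ⊗[C] B)) * J.map (algebraMap B (A ⊗[C] B)) := by
      intro a b ha hb
      have h2 : a ⊗ₜ[C] b = algebraMap A (A ⊗[C] B) a * algebraMap B (A ⊗[C] B) b := by
        show _ = (a ⊗ₜ[C] (1 : B)) * ((1 : A) ⊗ₜ[C] b)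
        rw [Algebra.TensorProduct.tmul_mul_tmul, mul_one, one_mul]
      rw [h2]
      exact Ideal.mul_mem_mul (Ideal.mem_map_of_mem _ ha) (Ideal.mem_map_of_mem _ hb)
    exact key _ _ i.2 j.2
  | add u v hu hv =>
    rw [map_add, map_add]
    exact Ideal.add_mem _ hu hv

end Main


end TorHelpers

/-- Let `C` be Noetherian, `A`, `B` commutative `C`-algebras,
`L` an `A`-module and `R = A ⊗_C B`.  If `A` and `A/tr_A(L)` are flat over `C`,
then `tr_A(L)R ∩ tr_B(N)R = (tr_A(L)R)·(tr_B(N)R)` for every finitely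
generated `B`-module `N`. -/
theorem traceIdeal_inf_eq_mul
    (C : Type*) [CommRing C] [IsNoetherianRing C]
    (A : Type*) [CommRing A] [Algebra C A]
    (B : Type*) [CommRing B] [Algebra C B]
    (L : Type*) [AddCommGroup L] [Module A L]
    (hA : Module.Flat C A) (hq : Module.Flat C (A ⧸ traceIdeal A L))
    (N : Type*) [AddCommGroup N] [Module B N] [Module.Finite B N] :
    (traceIdeal A L).map (algebraMap A (A ⊗[C] B)) ⊓
        (traceIdeal B N).map (algebraMap B (A ⊗[C] B)) =
      (traceIdeal A L).map (algebraMap A (A ⊗[C] B)) *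
        (traceIdeal B N).map (algebraMap B (A ⊗[C] B)) := by
  refine le_antisymm ?_ Ideal.mul_le_inf
  exact inf_le_mul_of_flat (traceIdeal A L) (traceIdeal B N) hq

end
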